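/- Let β ∈ (0,1) and let ν be an atomic β-biased probability measure on ℝ (centered at 0, finite first moment, S(ν) < ∞, ν({S(ν)}) ≥ β). If ν([0,∞)) > β, then ν is strongly β-biased, i.e., ν can be written as a mixture ν = ∫ ν_x ρ(dx) where each ν_x is simple γ(x)-biased for some γ(x) > β. -/

import Mathlib

open MeasureTheory ProbabilityTheory Set

noncomputable section

/-- Topological support of a measure on `ℝ`: points all of whose neighborhoods have
positive measure. -/
def msupp (ν : Measure ℝ) : Set ℝ := {x : ℝ | ∀ ε > 0, 0 < ν (Metric.ball x ε)}

/-- `S(ν)`, the supremum of the support. -/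
def Ssup (ν : Measure ℝ) : ℝ := sSup (msupp ν)

/-- `s(ν)`, the infimum of the support. -/
def sinf (ν : Measure ℝ) : ℝ := sInf (msupp ν)

/-- Barycenter of a finite measure. -/
def barOf (ν : Measure ℝ) : ℝ := (∫ y, y ∂ν) / (ν Set.univ).toReal

/-- A probability measure centered at `0` is simple `β`-biased if its restriction to
`[0,∞)` is a single atom of mass at least `β`. -/
def IsSimpleBiased (β : ℝ) (ν : Measure ℝ) : Prop :=
  IsProbabilityMeasure ν ∧ Integrable id ν ∧ (∫ y, y ∂ν) = 0 ∧
  ∃ M : ℝ, 0 ≤ M ∧ ν.restrict (Set.Ici 0) = ν {M} • Measure.dirac M ∧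
    ENNReal.ofReal β ≤ ν {M}

/-- A probability measure centered at `0` is atomic `β`-biased if its support is bounded
above and it has an atom of mass at least `β` at the maximum of its support. -/
def IsAtomicBiased (β : ℝ) (ν : Measure ℝ) : Prop :=
  IsProbabilityMeasure ν ∧ Integrable id ν ∧ (∫ y, y ∂ν) = 0 ∧
  BddAbove (msupp ν) ∧ ENNReal.ofReal β ≤ ν {Ssup ν}

/-- `ν` is a mixture of measures satisfying `P`. -/
def IsMixtureOf (ν : Measure ℝ) (P : Measure ℝ → Prop) : Prop :=
  ∃ ρ : Measure ℝ, IsProbabilityMeasure ρ ∧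
    ∃ κ : ProbabilityTheory.Kernel ℝ ℝ, IsMarkovKernel κ ∧
      (∀ x : ℝ, P (κ x)) ∧ ν = ρ.bind (fun x => κ x)

/-- `β`-biased probability measure (centered at `0`). -/
def IsBiased (β : ℝ) (ν : Measure ℝ) : Prop := IsMixtureOf ν (IsAtomicBiased β)

/-- `β`-biased around `x`. -/
def IsBiasedAround (β x : ℝ) (ν : Measure ℝ) : Prop :=
  IsBiased β (ν.map (fun y => y - x))

/-- Strongly `β`-biased probability measure (centered at `0`). -/
def IsStronglyBiased (β : ℝ) (ν : Measure ℝ) : Prop :=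
  ∃ ρ : Measure ℝ, IsProbabilityMeasure ρ ∧
    ∃ κ : ProbabilityTheory.Kernel ℝ ℝ, IsMarkovKernel κ ∧
      ∃ γ : ℝ → ℝ, (∀ x : ℝ, β < γ x ∧ IsSimpleBiased (γ x) (κ x)) ∧
        ν = ρ.bind (fun x => κ x)

/-- Strongly `β`-biased around `x`. -/
def IsStronglyBiasedAround (β x : ℝ) (ν : Measure ℝ) : Prop :=
  IsStronglyBiased β (ν.map (fun y => y - x))

/-- Convex order between finite measures on `ℝ`. -/
def ConvexOrder (μ ν : Measure ℝ) : Prop :=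
  ∀ φ : ℝ → ℝ, ConvexOn ℝ Set.univ φ → Integrable φ μ → Integrable φ ν →
    ∫ y, φ y ∂μ ≤ ∫ y, φ y ∂ν

/-- The distorted reflection `R^β`. -/
def Rbeta (β : ℝ) : ℝ → ℝ := fun x =>
  if 0 ≤ x then -(β / (1 - β)) * x else -((1 - β) / β) * x

/-- The transform `Z^β`. -/
def Zbeta (β : ℝ) (f : ℝ → ℝ) : ℝ → ℝ := fun x =>
  if 0 < x then ((1 - β) / β) * f ((β / (1 - β)) * x) else f x

/-- The `β`-biased order `μ ≼_β ν`: existence of a kernel `κ` with `ν = μ.bind κ` such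
that `κ x` is `β`-biased around `x` for `μ`-a.e. `x`. -/
def BiasedOrder (β : ℝ) (μ ν : Measure ℝ) : Prop :=
  ∃ κ : ProbabilityTheory.Kernel ℝ ℝ, IsMarkovKernel κ ∧
    (∀ᵐ x ∂μ, IsBiasedAround β x (κ x)) ∧ ν = μ.bind (fun x => κ x)

/-- The strong `β`-biased order `μ ≼_{sβ} ν`. -/
def StrongBiasedOrder (β : ℝ) (μ ν : Measure ℝ) : Prop :=
  ∃ κ : ProbabilityTheory.Kernel ℝ ℝ, IsMarkovKernel κ ∧
    (∀ᵐ x ∂μ, IsStronglyBiasedAround β x (κ x)) ∧ ν = μ.bind (fun x => κ x)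

/-- The 1-Wasserstein distance between probability measures on `ℝ`. -/
def W1 (μ ν : Measure ℝ) : ℝ :=
  sInf {c : ℝ | ∃ π : Measure (ℝ × ℝ), IsProbabilityMeasure π ∧
    π.map Prod.fst = μ ∧ π.map Prod.snd = ν ∧
    Integrable (fun p => |p.1 - p.2|) π ∧ c = ∫ p, |p.1 - p.2| ∂π}

/-- `η` is a regular conditional law of `X` given the sub-σ-algebra `m₀`. -/
def IsCondLaw {Ω : Type*} [mΩ : MeasurableSpace Ω] (m₀ : MeasurableSpace Ω)
    (P : Measure Ω) (X : Ω → ℝ) (η : Ω → Measure ℝ) : Prop :=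
  (∀ ω, IsProbabilityMeasure (η ω)) ∧
  ∀ B : Set ℝ, MeasurableSet B →
    (fun ω => (η ω B).toReal) =ᵐ[P] P[(X ⁻¹' B).indicator (fun _ => (1 : ℝ))|m₀]



lemma msupp_compl_null (ν : Measure ℝ) : ν ((msupp ν)ᶜ) = 0 := by
  apply measure_null_of_locally_null
  intro x hx
  simp only [msupp, mem_compl_iff, mem_setOf_eq, not_forall] at hx
  obtain ⟨ε, hε, hball⟩ := hx
  refine ⟨Metric.ball x ε, mem_nhdsWithin_of_mem_nhds (Metric.ball_mem_nhds x hε), ?_⟩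
  simpa using hball

lemma Ioi_Ssup_null (ν : Measure ℝ) (hbdd : BddAbove (msupp ν)) :
    ν (Set.Ioi (Ssup ν)) = 0 := by
  refine measure_mono_null (fun y hy => ?_) (msupp_compl_null ν)
  intro hmem
  exact absurd (le_csSup hbdd hmem) (not_le.mpr hy)


lemma eq_dirac_zero (ν : Measure ℝ) [IsProbabilityMeasure ν]
    (hint : Integrable id ν) (hbar : (∫ y, y ∂ν) = 0)
    (hc : ν (Set.Iio 0) = 0) : ν = Measure.dirac 0 := by
  have hae : ∀ᵐ y ∂ν, 0 ≤ y := by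
    rw [ae_iff]
    simpa using measure_mono_null (fun y hy => by simpa using hy) hc
  have h0 : (id : ℝ → ℝ) =ᵐ[ν] 0 := (integral_eq_zero_iff_of_nonneg_ae hae hint).mp hbar
  have hnull : ν {y : ℝ | y ≠ 0} = 0 := by
    have := h0
    rw [Filter.EventuallyEq, ae_iff] at this
    simpa using this
  ext B hB
  rw [Measure.dirac_apply' _ hB]
  by_cases h0B : (0:ℝ) ∈ B
  · have hBc : ν Bᶜ = 0 := measure_mono_null (fun y hy => by
      simp only [mem_setOf_eq]; intro hy0; rw [hy0] at hy; exact hy h0B) hnull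
    have := prob_compl_eq_zero_iff hB |>.mp hBc
    simp [this, h0B]
  · have hB0 : ν B = 0 := measure_mono_null (fun y hy => by
      simp only [mem_setOf_eq]; intro hy0; rw [hy0] at hy; exact h0B hy) hnull
    simp [hB0, h0B]

lemma integrable_id_dirac (a : ℝ) : Integrable id (Measure.dirac a) :=
  (integrable_const a).congr (ae_eq_dirac' measurable_id).symm

lemma simpleBiased_dirac_zero : IsSimpleBiased 1 (Measure.dirac (0:ℝ)) := by
  refine ⟨inferInstance, integrable_id_dirac 0, by simp [integral_dirac], 0, le_refl 0, ?_, ?_⟩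
  · classical
    rw [MeasureTheory.restrict_dirac]
    simp
  · simp

set_option maxHeartbeats 1600000 in
lemma main_case (β : ℝ) (hβ0 : 0 < β) (hβ1 : β < 1) (ν : Measure ℝ)
    [IsProbabilityMeasure ν] (hint : Integrable id ν) (hbar : (∫ y, y ∂ν) = 0)
    (hS_null : ν (Set.Ioi (Ssup ν)) = 0)
    (hatom : ENNReal.ofReal β ≤ ν {Ssup ν}) (hmass : ENNReal.ofReal β < ν (Set.Ici 0))
    (hc : ν (Set.Iio 0) ≠ 0) : IsStronglyBiased β ν := by
  set S := Ssup ν with hSdef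
  have hb' : β < (ν (Set.Ici 0)).toReal :=
    (ENNReal.ofReal_lt_iff_lt_toReal hβ0.le (measure_ne_top ν _)).mp hmass
  -- S ≥ 0
  have hS0 : 0 ≤ S := by
    by_contra hneg
    push_neg at hneg
    have hsub : Set.Ici (0:ℝ) ⊆ Set.Ioi S := fun y hy => lt_of_lt_of_le hneg hy
    have : ν (Set.Ici 0) = 0 := measure_mono_null hsub hS_null
    rw [this] at hmass
    exact absurd hmass (by simp)
  -- decomposition of ν
  have hIci : ν.restrict (Set.Ici 0) = ν.restrict (Set.Icc 0 S) := by
    have hU : Set.Ici (0:ℝ) = Set.Icc 0 S ∪ Set.Ioi S := by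
      ext y
      simp only [mem_Ici, mem_union, mem_Icc, mem_Ioi]
      constructor
      · intro h; rcases le_or_gt y S with h' | h'
        · exact Or.inl ⟨h, h'⟩
        · exact Or.inr h'
      · rintro (⟨h, _⟩ | h); exacts [h, le_trans hS0 h.le]
    rw [hU, Measure.restrict_union (by
        exact Set.disjoint_left.mpr fun y hy hy' => absurd hy.2 (not_le.mpr hy'))
      measurableSet_Ioi, Measure.restrict_eq_zero.mpr hS_null, add_zero]
  have hsum : ν.restrict (Set.Iio 0) + ν.restrict (Set.Icc 0 S) = ν := by
    rw [← hIci]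
    have hru := Measure.restrict_union (μ := ν) (s := Set.Iio (0:ℝ)) (t := Set.Ici (0:ℝ))
      (Set.disjoint_left.mpr fun y hy hy' => absurd (show y < 0 from hy) (not_lt.mpr hy')) measurableSet_Ici
    rw [Set.Iio_union_Ici, Measure.restrict_univ] at hru
    exact hru.symm
  set c : ℝ := (ν (Set.Iio 0)).toReal with hcdef
  have hc0 : 0 < c := ENNReal.toReal_pos hc (measure_ne_top ν _)
  set νm : Measure ℝ := (ν (Set.Iio 0))⁻¹ • ν.restrict (Set.Iio 0) with hνmdef
  have hνm_univ : νm univ = 1 := by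
    rw [hνmdef, Measure.smul_apply, Measure.restrict_apply_univ, smul_eq_mul,
      ENNReal.inv_mul_cancel hc (measure_ne_top ν _)]
  haveI hνmP : IsProbabilityMeasure νm := ⟨hνm_univ⟩
  have hinv_ne_top : (ν (Set.Iio 0))⁻¹ ≠ ⊤ := ENNReal.inv_ne_top.mpr hc
  have hint_m : Integrable id νm := (hint.restrict).smul_measure hinv_ne_top
  have hint_p : Integrable id (ν.restrict (Set.Icc 0 S)) := hint.restrict
  have hint_n : Integrable id (ν.restrict (Set.Iio 0)) := hint.restrict
  set m : ℝ := ∫ y in Set.Icc 0 S, y ∂ν with hmdef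
  have hsplit : (∫ y in Set.Iio 0, y ∂ν) + m = 0 := by
    have h2 := integral_add_measure (f := id) hint_n hint_p
    rw [hsum] at h2
    simpa [hmdef] using h2.symm.trans hbar
  have hm_neg : (∫ y in Set.Iio 0, y ∂ν) < 0 := by
    rcases lt_or_eq_of_le (integral_nonpos_of_ae (μ := ν.restrict (Set.Iio 0))
        (f := id) ((ae_restrict_mem measurableSet_Iio).mono fun y hy => le_of_lt hy))
      with h | h
    · exact h
    · exfalso
      have hnn : 0 ≤ᵐ[ν.restrict (Set.Iio 0)] (fun y => -y) := by
        filter_upwards [ae_restrict_mem measurableSet_Iio] with y hy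
        simpa using le_of_lt hy
      have hz : (∫ y in Set.Iio 0, -y ∂ν) = 0 := by
        rw [integral_neg]; simpa using h
      have := (integral_eq_zero_iff_of_nonneg_ae hnn hint_n.neg).mp hz
      have hfalse : ∀ᵐ y ∂ν.restrict (Set.Iio 0), False := by
        filter_upwards [ae_restrict_mem measurableSet_Iio, this] with y hy hzy
        have : y = 0 := by simpa using hzy
        rw [this] at hy; exact absurd hy (by simp)
      rw [ae_iff] at hfalse
      simp only [not_false_eq_true, setOf_true] at hfalse
      rw [Measure.restrict_apply_univ] at hfalse
      exact hc hfalse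
  have hm_pos : 0 < m := by linarith
  have hm_eq : (∫ y in Set.Iio 0, y ∂ν) = -m := by linarith
  set b : ℝ := (ν (Set.Icc 0 S)).toReal with hbdef
  have hIcieq : ν (Set.Ici 0) = ν (Set.Icc 0 S) := by
    rw [← Measure.restrict_apply_univ, hIci, Measure.restrict_apply_univ]
  have hb : β < b := by rw [hbdef, ← hIcieq]; exact hb'
  have hcb : c + b = 1 := by
    have h1 : ν (Set.Iio 0) + ν (Set.Icc 0 S) = 1 := by
      have := congrArg (fun μ : Measure ℝ => μ univ) hsum
      simpa [Measure.add_apply, Measure.restrict_apply_univ, measure_univ] using this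
    rw [hcdef, hbdef, ← ENNReal.toReal_add (measure_ne_top ν _) (measure_ne_top ν _), h1]
    simp
  have hcβ : c < 1 - β := by linarith
  have hb1 : b ≤ 1 := by
    rw [hbdef]
    exact ENNReal.toReal_le_of_le_ofReal one_pos.le (by simpa using prob_le_one)
  have hb0 : 0 ≤ b := ENNReal.toReal_nonneg
  -- m ≤ b * S
  have hmS : m ≤ b * S := by
    have hmono : m ≤ ∫ _ in Set.Icc 0 S, S ∂ν := by
      refine integral_mono_ae hint_p (integrable_const S) ?_
      filter_upwards [ae_restrict_mem measurableSet_Icc] with y hy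
      exact hy.2
    rwa [integral_const, measureReal_restrict_apply_univ, measureReal_def, smul_eq_mul] at hmono
  have hS_pos : 0 < S := by nlinarith
  have haβ : β ≤ (ν {S}).toReal :=
    (ENNReal.ofReal_le_iff_le_toReal (measure_ne_top ν _)).mp hatom
  have hSm : S * β ≤ m := by
    have h1 : (∫ y in ({S} : Set ℝ), y ∂ν) = (ν {S}).toReal * S := by
      have : (∫ y in ({S} : Set ℝ), y ∂ν) = ∫ _ in ({S} : Set ℝ), S ∂ν := by
        refine integral_congr_ae ?_
        filter_upwards [ae_restrict_mem (measurableSet_singleton S)] with y hy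
        exact hy
      rw [this, integral_const, measureReal_restrict_apply_univ, measureReal_def, smul_eq_mul]
    have h2 : (∫ y in ({S} : Set ℝ), y ∂ν) ≤ m := by
      refine setIntegral_mono_set hint_p ?_ ?_
      · filter_upwards [ae_restrict_mem measurableSet_Icc] with y hy
        exact hy.1
      · have hsub : ({S} : Set ℝ) ⊆ Set.Icc 0 S := by
          intro y hy
          rw [mem_singleton_iff] at hy
          subst hy; exact ⟨hS0, le_refl S⟩
        exact hsub.eventuallyLE
    have h3 : S * β ≤ (ν {S}).toReal * S := by
      rw [mul_comm]
      exact mul_le_mul_of_nonneg_right haβ hS0 |>.trans_eq rfl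
    calc S * β ≤ (ν {S}).toReal * S := by nlinarith
      _ = ∫ y in ({S} : Set ℝ), y ∂ν := h1.symm
      _ ≤ m := h2
  -- the projection and the bias function
  set proj : ℝ → ℝ := fun x => min (max x 0) S with hprojdef
  have hproj0 : ∀ x, 0 ≤ proj x := fun x => le_min (le_max_right x 0) hS0
  have hprojS : ∀ x, proj x ≤ S := fun x => min_le_right _ _
  have hproj_cont : Continuous proj := (continuous_id.max continuous_const).min continuous_const
  have hd_pos : ∀ x, 0 < c * proj x + m := fun x => by nlinarith [hproj0 x]
  set γ : ℝ → ℝ := fun x => m / (c * proj x + m) with hγdef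
  have hγ_cont : Continuous γ :=
    continuous_const.div (((continuous_const.mul hproj_cont).add continuous_const))
      (fun x => ne_of_gt (hd_pos x))
  have hγ_pos : ∀ x, 0 < γ x := fun x => div_pos hm_pos (hd_pos x)
  have hγ_le1 : ∀ x, γ x ≤ 1 := fun x => by
    rw [hγdef, div_le_one (hd_pos x)]; nlinarith [hproj0 x]
  have hγβ : ∀ x, β < γ x := by
    intro x
    rw [hγdef, lt_div_iff₀ (hd_pos x)]
    nlinarith [mul_le_mul_of_nonneg_left (hprojS x) (mul_pos hβ0 hc0).le,
      mul_lt_mul_of_pos_right hcβ (mul_pos hβ0 hS_pos),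
      mul_le_mul_of_nonneg_left hSm (by linarith : (0:ℝ) ≤ 1 - β)]
  clear_value S c m b νm proj γ
  -- mean of νm
  have hνm_mean : (∫ y, y ∂νm) = -(m / c) := by
    rw [hνmdef, integral_smul_measure, ENNReal.toReal_inv, ← hcdef, smul_eq_mul]
    have h' : (∫ y, y ∂ν.restrict (Set.Iio 0)) = -m := hm_eq
    rw [h', mul_neg, inv_mul_eq_div]
  have hνm_Ici : νm.restrict (Set.Ici 0) = 0 := by
    rw [hνmdef, Measure.restrict_smul, Measure.restrict_restrict measurableSet_Ici]
    have h' : Set.Ici (0:ℝ) ∩ Set.Iio 0 = ∅ := by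
      rw [Set.Ici_inter_Iio, Set.Ico_self]
    rw [h', Measure.restrict_empty, smul_zero]
  have hνm_sing : ∀ p : ℝ, 0 ≤ p → νm {p} = 0 := by
    intro p hp
    rw [hνmdef, Measure.smul_apply, Measure.restrict_apply (measurableSet_singleton p)]
    have h' : ({p} : Set ℝ) ∩ Set.Iio 0 = ∅ := by
      ext y
      simp only [mem_inter_iff, mem_singleton_iff, mem_Iio, mem_empty_iff_false, iff_false,
        not_and]
      rintro rfl
      exact not_lt.mpr hp
    rw [h']
    simp
  -- the kernel
  set kf : ℝ → Measure ℝ := fun x =>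
    ENNReal.ofReal (γ x) • Measure.dirac (proj x) + ENNReal.ofReal (1 - γ x) • νm with hkfdef
  clear_value kf
  have hkf_apply : ∀ (x : ℝ) (B : Set ℝ), MeasurableSet B →
      kf x B = ENNReal.ofReal (γ x) * B.indicator 1 (proj x)
        + ENNReal.ofReal (1 - γ x) * νm B := by
    intro x B hB
    rw [hkfdef]
    simp [Measure.add_apply, Measure.smul_apply, smul_eq_mul, Measure.dirac_apply' _ hB]
  have hkmeas : Measurable kf := by
    apply Measure.measurable_of_measurable_coe
    intro B hB
    have heq : (fun x => kf x B) = fun x =>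
        ENNReal.ofReal (γ x) * B.indicator 1 (proj x) + ENNReal.ofReal (1 - γ x) * νm B :=
      funext fun x => hkf_apply x B hB
    rw [heq]
    exact ((ENNReal.measurable_ofReal.comp hγ_cont.measurable).mul
        ((measurable_one.indicator hB).comp hproj_cont.measurable)).add
      ((ENNReal.measurable_ofReal.comp ((continuous_const.sub hγ_cont).measurable)).mul_const _)
  have hkf_univ : ∀ x, kf x univ = 1 := by
    intro x
    rw [hkf_apply x univ MeasurableSet.univ]
    simp only [indicator_univ, Pi.one_apply, mul_one, hνm_univ]
    rw [← ENNReal.ofReal_add (hγ_pos x).le (by linarith [hγ_le1 x])]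
    norm_num
  -- each kf x is simple (γ x)-biased
  have hsing : ∀ x, kf x {proj x} = ENNReal.ofReal (γ x) := by
    intro x
    rw [hkf_apply x _ (measurableSet_singleton _), hνm_sing (proj x) (hproj0 x), mul_zero,
      add_zero, indicator_of_mem (mem_singleton (proj x))]
    simp
  have hsimple : ∀ x, IsSimpleBiased (γ x) (kf x) := by
    intro x
    have hprob : IsProbabilityMeasure (kf x) := ⟨hkf_univ x⟩
    have hia : Integrable id (ENNReal.ofReal (γ x) • Measure.dirac (proj x)) :=
      (integrable_id_dirac (proj x)).smul_measure ENNReal.ofReal_ne_top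
    have hib : Integrable id (ENNReal.ofReal (1 - γ x) • νm) :=
      hint_m.smul_measure ENNReal.ofReal_ne_top
    have hint_k : Integrable id (kf x) := by
      rw [hkfdef]
      exact hia.add_measure hib
    refine ⟨hprob, hint_k, ?_, proj x, hproj0 x, ?_, ?_⟩
    · -- barycenter zero
      have hγd : γ x * (c * proj x + m) = m := by
        rw [hγdef]; exact div_mul_cancel₀ m (ne_of_gt (hd_pos x))
      have h1 : (∫ y, y ∂kf x) = γ x * proj x + (1 - γ x) * -(m / c) := by
        rw [hkfdef]
        rw [show (fun y : ℝ => y) = id from rfl]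
        rw [integral_add_measure hia hib, integral_smul_measure, integral_smul_measure,
          ENNReal.toReal_ofReal (hγ_pos x).le, ENNReal.toReal_ofReal (by linarith [hγ_le1 x])]
        have hd : (∫ y, id y ∂Measure.dirac (proj x)) = proj x := by
          rw [integral_dirac]; rfl
        rw [hd]
        have hm' : (∫ y, id y ∂νm) = -(m / c) := hνm_mean
        rw [hm', smul_eq_mul, smul_eq_mul]
      have h2 : (1 - γ x) * (m / c) = γ x * proj x := by
        rw [mul_div_assoc', div_eq_iff (ne_of_gt hc0)]
        nlinarith [hγd]
      rw [h1, ← h2]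
      ring
    · -- restriction to Ici 0
      rw [hsing x, hkfdef]
      rw [Measure.restrict_add, Measure.restrict_smul, Measure.restrict_smul, hνm_Ici,
        smul_zero, add_zero]
      congr 1
      classical
      rw [MeasureTheory.restrict_dirac' measurableSet_Ici]
      simp [mem_Ici, hproj0 x]
    · rw [hsing x]
  -- the mixing measure
  set g : ℝ → ℝ := fun y => (c * proj y + m) / m with hgdef
  clear_value g
  have hγinv : ∀ y, (γ y)⁻¹ = g y := fun y => by
    rw [hγdef, hgdef]; simp [inv_div]
  have hg_nonneg : ∀ y, 0 ≤ g y := fun y => by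
    rw [hgdef]
    exact div_nonneg (by nlinarith [hproj0 y]) hm_pos.le
  have hg1 : ∀ y, 1 ≤ g y := fun y => by
    rw [hgdef, le_div_iff₀ hm_pos]; nlinarith [hproj0 y]
  have hg_cont : Continuous g := by
    rw [hgdef]
    exact ((continuous_const.mul hproj_cont).add continuous_const).div_const m
  have hg_int : Integrable g (ν.restrict (Set.Icc 0 S)) := by
    refine Integrable.mono' (integrable_const ((c * S + m) / m))
      hg_cont.aestronglyMeasurable ?_
    refine Filter.Eventually.of_forall (fun y => ?_)
    rw [Real.norm_eq_abs, abs_of_nonneg (hg_nonneg y), hgdef]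
    exact (div_le_div_iff_of_pos_right hm_pos).mpr (by nlinarith [hprojS y])
  have hmulγ : ∀ y, g y * γ y = 1 := fun y => by
    rw [← hγinv y]; exact inv_mul_cancel₀ (ne_of_gt (hγ_pos y))
  have hg_integral : (∫ y, g y ∂ν.restrict (Set.Icc 0 S)) = 1 := by
    have hae : g =ᵐ[ν.restrict (Set.Icc 0 S)] fun y => (c * y + m) / m := by
      filter_upwards [ae_restrict_mem measurableSet_Icc] with y hy
      rw [hgdef]
      have hpy : proj y = y := by
        rw [hprojdef]; simp only; rw [max_eq_left hy.1, min_eq_left hy.2]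
      simp only [hpy]
    rw [integral_congr_ae hae]
    have hintcy : Integrable (fun y : ℝ => c * y) (ν.restrict (Set.Icc 0 S)) := by
      simpa using hint_p.const_mul c
    have h2 : (∫ y, (c * y + m) / m ∂ν.restrict (Set.Icc 0 S)) = (c * m + b * m) / m := by
      rw [integral_div]
      congr 1
      rw [integral_add hintcy (integrable_const m), integral_const,
        measureReal_restrict_apply_univ, measureReal_def, smul_eq_mul, integral_const_mul, ← hmdef, ← hbdef]
    rw [h2, div_eq_one_iff_eq (ne_of_gt hm_pos)]
    nlinarith [hcb]
  set ρ : Measure ℝ := (ν.restrict (Set.Icc 0 S)).withDensity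
    (fun y => ENNReal.ofReal (g y)) with hρdef
  clear_value ρ
  have hρ_univ : ρ univ = 1 := by
    rw [hρdef, withDensity_apply _ MeasurableSet.univ, setLIntegral_univ,
      ← ofReal_integral_eq_lintegral_ofReal hg_int (Filter.Eventually.of_forall hg_nonneg),
      hg_integral, ENNReal.ofReal_one]
  -- the bind identity
  have hbind : ν = ρ.bind kf := by
    ext B hB
    rw [Measure.bind_apply hB hkmeas.aemeasurable]
    rw [hρdef, lintegral_withDensity_eq_lintegral_mul _
      (hg_cont.measurable.ennreal_ofReal)
      (show Measurable fun a => kf a B from (Measure.measurable_coe hB).comp hkmeas)]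
    have hae : (fun y => ((fun z => ENNReal.ofReal (g z)) * (fun z => kf z B)) y)
        =ᵐ[ν.restrict (Set.Icc 0 S)]
        (fun y => B.indicator 1 y + ENNReal.ofReal (g y - 1) * νm B) := by
      filter_upwards [ae_restrict_mem measurableSet_Icc] with y hy
      have hpy : proj y = y := by
        rw [hprojdef]; simp only; rw [max_eq_left hy.1, min_eq_left hy.2]
      simp only [Pi.mul_apply]
      rw [hkf_apply y B hB, hpy, mul_add, ← mul_assoc, ← mul_assoc,
        ← ENNReal.ofReal_mul (hg_nonneg y), hmulγ y, ENNReal.ofReal_one, one_mul,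
        ← ENNReal.ofReal_mul (hg_nonneg y)]
      have h' : g y * (1 - γ y) = g y - 1 := by
        nlinarith [hmulγ y]
      rw [h']
    rw [lintegral_congr_ae hae, lintegral_add_left (measurable_one.indicator hB),
      lintegral_indicator_one hB,
      lintegral_mul_const _ (show Measurable fun y => ENNReal.ofReal (g y - 1) from
        (hg_cont.sub continuous_const).measurable.ennreal_ofReal)]
    have hgm1 : (∫⁻ y, ENNReal.ofReal (g y - 1) ∂ν.restrict (Set.Icc 0 S))
        = ENNReal.ofReal c := by
      rw [← ofReal_integral_eq_lintegral_ofReal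
        (show Integrable (fun y => g y - 1) (ν.restrict (Set.Icc 0 S)) from
          hg_int.sub (integrable_const 1))
        (Filter.Eventually.of_forall (fun y => by
          show (0:ℝ) ≤ g y - 1
          linarith [hg1 y]))]
      congr 1
      rw [integral_sub hg_int (integrable_const 1), hg_integral, integral_const,
        measureReal_restrict_apply_univ, measureReal_def, smul_eq_mul, mul_one]
      linarith [hcb]
    rw [hgm1, hcdef, ENNReal.ofReal_toReal (measure_ne_top ν _), hνmdef,
      Measure.smul_apply, smul_eq_mul, ← mul_assoc,
      ENNReal.mul_inv_cancel hc (measure_ne_top ν _), one_mul]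
    conv_lhs => rw [← hsum]
    rw [Measure.add_apply]
    exact add_comm _ _
  exact ⟨ρ, ⟨hρ_univ⟩, ⟨kf, hkmeas⟩, ⟨fun x => ⟨hkf_univ x⟩⟩, γ,
    fun x => ⟨hγβ x, hsimple x⟩, hbind⟩

/-- an atomic `β`-biased probability with `ν([0,∞)) > β` is strongly
`β`-biased. -/
theorem stmt9 (β : ℝ) (hβ : β ∈ Set.Ioo (0 : ℝ) 1) (ν : Measure ℝ)
    (h : IsAtomicBiased β ν) (hmass : ENNReal.ofReal β < ν (Set.Ici 0)) :
    IsStronglyBiased β ν := by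
  obtain ⟨hprob, hint, hbar, hbdd, hatom⟩ := h
  haveI := hprob
  by_cases hc : ν (Set.Iio 0) = 0
  · have hν : ν = Measure.dirac 0 := eq_dirac_zero ν hint hbar hc
    refine ⟨Measure.dirac 0, inferInstance, Kernel.const ℝ (Measure.dirac 0), inferInstance,
      fun _ => 1, fun x => ⟨hβ.2, by simpa using simpleBiased_dirac_zero⟩, ?_⟩
    rw [hν, Measure.dirac_bind (Kernel.measurable _), Kernel.const_apply]
  · exact main_case β hβ.1 hβ.2 ν hint hbar (Ioi_Ssup_null ν hbdd) hatom hmass hc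

end
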